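/- Let ψ(s) = a log(1+s²) with 0 < a ≤ 1/√2 and define ζ(t) by t = ∫₀^{ζ(t)} √(1+ψ'(s)²) ds and κ(t) = ψ'(ζ(t))ψ''(ζ(t)) / [ζ(t)(1+ψ'(ζ(t))²)²]. Then ∫₀^∞ t κ₊(t) dt ≤ 1, where κ₊ = max{κ,0}. In fact ∫₀^∞ t κ₊(t) dt ≤ 2a². -/

import Mathlib

set_option maxHeartbeats 1000000

open MeasureTheory Set

/-- for `ψ(s) = a log(1+s²)` with `0 < a ≤ 1/√2`, the radial (Gaussian)
curvature `κ(t) = ψ'(ζ(t))ψ''(ζ(t)) / (ζ(t)(1+ψ'(ζ(t))²)²)` of the surface of revolution,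
where `t = ∫₀^{ζ(t)} √(1+ψ'(s)²) ds`, satisfies `∫₀^∞ t κ₊(t) dt ≤ 2a² ≤ 1`. -/
theorem stmt_18 (a : ℝ) (ha : 0 < a) (ha' : a ≤ 1 / Real.sqrt 2)
    (ψ : ℝ → ℝ) (hψ : ∀ s, ψ s = a * Real.log (1 + s ^ 2))
    (ζ : ℝ → ℝ) (hζnn : ∀ t ≥ (0:ℝ), 0 ≤ ζ t)
    (hζ : ∀ t ≥ (0:ℝ), t = ∫ s in (0:ℝ)..(ζ t), Real.sqrt (1 + deriv ψ s ^ 2))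
    (κ : ℝ → ℝ)
    (hκ : ∀ t > (0:ℝ), κ t = deriv ψ (ζ t) * deriv (deriv ψ) (ζ t) /
      (ζ t * (1 + deriv ψ (ζ t) ^ 2) ^ 2)) :
    MeasureTheory.IntegrableOn (fun t => t * max (κ t) 0) (Set.Ioi 0) ∧
      (∫ t in Set.Ioi (0:ℝ), t * max (κ t) 0) ≤ 2 * a ^ 2 ∧
      (∫ t in Set.Ioi (0:ℝ), t * max (κ t) 0) ≤ 1 := by
  have hψfun : ψ = fun s => a * Real.log (1 + s ^ 2) := funext hψ
  subst hψfun
  have h1s : ∀ s : ℝ, (0:ℝ) < 1 + s ^ 2 := fun s => by positivity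
  set P : ℝ → ℝ := fun s => 2 * a * s / (1 + s ^ 2) with hPdef
  set Q : ℝ → ℝ := fun s => 2 * a * (1 - s ^ 2) / (1 + s ^ 2) ^ 2 with hQdef
  -- first derivative
  have hden : ∀ s : ℝ, HasDerivAt (fun s : ℝ => 1 + s ^ 2) (2 * s) s := by
    intro s
    simpa using ((hasDerivAt_pow 2 s).const_add 1)
  have hP : ∀ s : ℝ, HasDerivAt (fun s : ℝ => a * Real.log (1 + s ^ 2)) (P s) s := by
    intro s
    have h : HasDerivAt (fun s : ℝ => a * Real.log (1 + s ^ 2)) _ s :=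
      ((hden s).log (ne_of_gt (h1s s))).const_mul a
    convert h using 1
    show 2 * a * s / (1 + s ^ 2) = _
    field_simp
  have hderiv : deriv (fun s : ℝ => a * Real.log (1 + s ^ 2)) = P :=
    funext fun s => (hP s).deriv
  have hQ : ∀ s : ℝ, HasDerivAt P (Q s) s := by
    intro s
    have hnum : HasDerivAt (fun s : ℝ => 2 * a * s) (2 * a) s := by
      simpa using (hasDerivAt_id s).const_mul (2 * a)
    have h : HasDerivAt P _ s := hnum.div (hden s) (ne_of_gt (h1s s))
    convert h using 1
    show 2 * a * (1 - s ^ 2) / (1 + s ^ 2) ^ 2 = _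
    field_simp
    ring
  have hderiv2 : deriv (deriv (fun s : ℝ => a * Real.log (1 + s ^ 2))) = Q := by
    rw [hderiv]; exact funext fun s => (hQ s).deriv
  -- basic sign facts
  have hPnn : ∀ s : ℝ, 0 ≤ s → 0 ≤ P s := fun s hs => by
    simp only [hPdef]; positivity
  have hPle : ∀ s : ℝ, 0 ≤ s → P s ≤ 2 * a := by
    intro s hs
    simp only [hPdef]
    rw [div_le_iff₀ (h1s s)]
    nlinarith [sq_nonneg s, ha.le, mul_nonneg ha.le (sq_nonneg s)]
  have hQnn : ∀ s : ℝ, 0 ≤ s → s ≤ 1 → 0 ≤ Q s := by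
    intro s hs0 hs
    simp only [hQdef]
    apply div_nonneg _ (by positivity)
    have : 0 ≤ 1 - s ^ 2 := by nlinarith
    nlinarith [ha.le]
  have hQle : ∀ s : ℝ, 0 ≤ s → Q s ≤ 2 * a := by
    intro s hs
    simp only [hQdef]
    rw [div_le_iff₀ (by positivity)]
    nlinarith [sq_nonneg s, sq_nonneg (s ^ 2), mul_nonneg ha.le (sq_nonneg s),
      mul_nonneg ha.le (sq_nonneg (s ^ 2))]
  have hQnp : ∀ s : ℝ, 1 ≤ s → Q s ≤ 0 := by
    intro s hs
    simp only [hQdef]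
    apply div_nonpos_of_nonpos_of_nonneg _ (by positivity)
    have h1 : 1 ≤ s ^ 2 := by nlinarith
    nlinarith [mul_nonneg ha.le (sub_nonneg.2 h1)]
  -- the metric factor g
  set g : ℝ → ℝ := fun s => Real.sqrt (1 + P s ^ 2) with hgdef
  have hPcont : Continuous P := by
    rw [hPdef]
    exact Continuous.div (continuous_const.mul continuous_id)
      (continuous_const.add (continuous_pow 2)) (fun s => ne_of_gt (h1s s))
  have hQcont : Continuous Q := by
    rw [hQdef]
    exact Continuous.div (continuous_const.mul (continuous_const.sub (continuous_pow 2)))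
      ((continuous_const.add (continuous_pow 2)).pow 2) (fun s => ne_of_gt (by positivity))
  have hgcont : Continuous g := (continuous_const.add (hPcont.pow 2)).sqrt
  have hg1 : ∀ s : ℝ, 1 ≤ g s := by
    intro s
    have h := Real.sqrt_le_sqrt (show (1:ℝ) ≤ 1 + P s ^ 2 by nlinarith [sq_nonneg (P s)])
    simpa [hgdef] using h
  have hgpos : ∀ s : ℝ, 0 < g s := fun s => lt_of_lt_of_le one_pos (hg1 s)
  have hgsq : ∀ s : ℝ, g s ^ 2 = 1 + P s ^ 2 := fun s =>
    Real.sq_sqrt (by positivity)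
  -- G, the arclength function
  set G : ℝ → ℝ := fun z => ∫ s in (0:ℝ)..z, g s with hGdef
  have hGd : ∀ z : ℝ, HasDerivAt G (g z) z := by
    intro z
    exact intervalIntegral.integral_hasDerivAt_right (hgcont.intervalIntegrable 0 z)
      (hgcont.stronglyMeasurable.stronglyMeasurableAtFilter) hgcont.continuousAt
  have hGmono : StrictMono G :=
    strictMono_of_deriv_pos (fun z => by rw [(hGd z).deriv]; exact hgpos z)
  have hGcont : Continuous G := continuous_iff_continuousAt.mpr fun z => (hGd z).continuousAt
  have hG0 : G 0 = 0 := intervalIntegral.integral_same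
  have hGz : ∀ z : ℝ, 0 ≤ z → z ≤ G z := by
    intro z hz
    have h : (∫ s in (0:ℝ)..z, (1:ℝ)) ≤ ∫ s in (0:ℝ)..z, g s :=
      intervalIntegral.integral_mono_on hz intervalIntegrable_const
        (hgcont.intervalIntegrable 0 z) (fun x _ => hg1 x)
    simpa [hGdef] using h
  have hG1pos : (0:ℝ) < G 1 := lt_of_lt_of_le one_pos (hGz 1 one_pos.le)
  -- G z ≤ z * g z on [0,1]
  have hgmono : ∀ s x : ℝ, 0 ≤ s → s ≤ x → x ≤ 1 → g s ≤ g x := by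
    intro s x hs hsx hx1
    apply Real.sqrt_le_sqrt
    have h1 : P s ≤ P x := by
      simp only [hPdef]
      rw [div_le_div_iff₀ (h1s s) (h1s x)]
      nlinarith [mul_nonneg (sub_nonneg.2 hsx) (sub_nonneg.2 (show s * x ≤ 1 by nlinarith))]
    have h2 : 0 ≤ P s := hPnn s hs
    nlinarith
  have hGle : ∀ x : ℝ, 0 ≤ x → x ≤ 1 → G x ≤ x * g x := by
    intro x hx hx1
    have h : (∫ s in (0:ℝ)..x, g s) ≤ ∫ s in (0:ℝ)..x, g x :=
      intervalIntegral.integral_mono_on hx (hgcont.intervalIntegrable 0 x)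
        intervalIntegrable_const (fun s hs => hgmono s x hs.1 hs.2 hx1)
    simpa [hGdef, mul_comm] using h
  -- ζ relation
  have hζ' : ∀ t : ℝ, 0 ≤ t → t = G (ζ t) := by
    intro t ht
    have h := hζ t ht
    have h2 : (∫ s in (0:ℝ)..(ζ t), Real.sqrt (1 + deriv (fun s : ℝ =>
        a * Real.log (1 + s ^ 2)) s ^ 2)) = G (ζ t) := by
      apply intervalIntegral.integral_congr
      intro s _
      rw [hderiv]
    exact h.trans h2
  have hζG : ∀ z : ℝ, 0 ≤ z → ζ (G z) = z := by
    intro z hz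
    have h0 : (0:ℝ) ≤ G z := le_trans hz (hGz z hz)
    have h := hζ' (G z) h0
    exact hGmono.injective h.symm
  have hζpos : ∀ t : ℝ, 0 < t → 0 < ζ t := by
    intro t ht
    rcases (hζnn t ht.le).lt_or_eq with h | h
    · exact h
    · exfalso
      have := hζ' t ht.le
      rw [← h, hG0] at this
      exact absurd this (ne_of_gt ht)
  have hζ1 : ∀ t : ℝ, G 1 ≤ t → 1 ≤ ζ t := by
    intro t ht
    have ht0 : (0:ℝ) ≤ t := le_trans hG1pos.le ht
    have h := hζ' t ht0
    by_contra hc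
    push_neg at hc
    have := hGmono hc
    rw [← h] at this
    exact absurd ht (not_le.mpr this)
  -- κ rewritten
  have hκ' : ∀ t : ℝ, 0 < t →
      κ t = P (ζ t) * Q (ζ t) / (ζ t * (1 + P (ζ t) ^ 2) ^ 2) := by
    intro t ht
    rw [hκ t ht, hderiv2, hderiv]
  -- F vanishes beyond G 1
  set F : ℝ → ℝ := fun t => t * max (κ t) 0 with hFdef
  have hF2 : ∀ t ∈ Ici (G 1), F t = 0 := by
    intro t ht
    have ht' : G 1 ≤ t := ht
    have ht0 : (0:ℝ) < t := lt_of_lt_of_le hG1pos ht'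
    have hz1 : 1 ≤ ζ t := hζ1 t ht'
    have hznn : 0 ≤ ζ t := le_trans one_pos.le hz1
    have hκle : κ t ≤ 0 := by
      rw [hκ' t ht0]
      apply div_nonpos_of_nonpos_of_nonneg
      · exact mul_nonpos_of_nonneg_of_nonpos (hPnn _ hznn) (hQnp _ hz1)
      · positivity
    simp [hFdef, max_eq_right hκle]
  -- change of variables setup
  have himg : G '' Ioo 0 1 = Ioo 0 (G 1) := by
    apply Subset.antisymm
    · rintro y ⟨x, hx, rfl⟩
      exact ⟨hG0 ▸ hGmono hx.1, hGmono hx.2⟩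
    · have h := intermediate_value_Ioo (le_of_lt one_pos) hGcont.continuousOn
      rw [hG0] at h
      exact h
  have hd : ∀ x ∈ Ioo (0:ℝ) 1, HasDerivWithinAt G (g x) (Ioo (0:ℝ) 1) x :=
    fun x _ => (hGd x).hasDerivWithinAt
  have hinj : InjOn G (Ioo (0:ℝ) 1) := hGmono.injective.injOn
  -- E: the substituted integrand, explicitly
  set E : ℝ → ℝ := fun x => g x * G x * (P x * Q x) / (x * (1 + P x ^ 2) ^ 2) with hEdef
  have hE : ∀ x ∈ Ioo (0:ℝ) 1, |g x| • F (G x) = E x := by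
    intro x hx
    have hx0 : 0 < x := hx.1
    have hGx : 0 < G x := lt_of_lt_of_le hx0 (hGz x hx0.le)
    have hζGx : ζ (G x) = x := hζG x hx0.le
    have hκGx : κ (G x) = P x * Q x / (x * (1 + P x ^ 2) ^ 2) := by
      rw [hκ' (G x) hGx, hζGx]
    have hκnn : 0 ≤ κ (G x) := by
      rw [hκGx]
      apply div_nonneg _ (by positivity)
      exact mul_nonneg (hPnn x hx0.le) (hQnn x hx.1.le hx.2.le)
    rw [abs_of_pos (hgpos x)]
    simp only [hFdef, smul_eq_mul, hEdef]
    rw [max_eq_left hκnn, hκGx]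
    ring
  -- E is bounded by P * Q on Ioo 0 1
  have hEbound : ∀ x ∈ Ioo (0:ℝ) 1, 0 ≤ E x ∧ E x ≤ P x * Q x := by
    intro x hx
    have hx0 : 0 < x := hx.1
    have hGx : 0 ≤ G x := le_trans hx0.le (hGz x hx0.le)
    have hPQ : 0 ≤ P x * Q x := mul_nonneg (hPnn x hx0.le) (hQnn x hx.1.le hx.2.le)
    constructor
    · simp only [hEdef]
      apply div_nonneg _ (by positivity)
      have := (hgpos x).le
      positivity
    · simp only [hEdef]
      rw [div_le_iff₀ (by positivity)]
      have hkey : g x * G x ≤ x * (1 + P x ^ 2) ^ 2 := by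
        have h1 : G x ≤ x * g x := hGle x hx0.le hx.2.le
        have h2 : g x * G x ≤ g x * (x * g x) :=
          mul_le_mul_of_nonneg_left h1 (hgpos x).le
        have h3 : g x * (x * g x) = x * g x ^ 2 := by ring
        have hg2 : 1 ≤ g x ^ 2 := by nlinarith [hg1 x, hgpos x]
        have h4 : g x ^ 2 ≤ (g x ^ 2) ^ 2 := by
          nlinarith [mul_nonneg (by nlinarith : (0:ℝ) ≤ g x ^ 2)
            (by nlinarith : (0:ℝ) ≤ g x ^ 2 - 1)]
        calc g x * G x ≤ x * g x ^ 2 := by rw [← h3]; exact h2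
          _ ≤ x * (g x ^ 2) ^ 2 := by nlinarith
          _ = x * (1 + P x ^ 2) ^ 2 := by rw [hgsq]
      calc g x * G x * (P x * Q x) ≤ x * (1 + P x ^ 2) ^ 2 * (P x * Q x) := by
            exact mul_le_mul_of_nonneg_right hkey hPQ
        _ = P x * Q x * (x * (1 + P x ^ 2) ^ 2) := by ring
  -- continuity of E on Ioo 0 1
  have hEcont : ContinuousOn E (Ioo (0:ℝ) 1) := by
    apply ContinuousOn.div
    · exact (((hgcont.mul hGcont).mul (hPcont.mul hQcont))).continuousOn
    · exact (continuous_id.mul ((continuous_const.add (hPcont.pow 2)).pow 2)).continuousOn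
    · intro x hx
      have hx0 : 0 < x := hx.1
      have := sq_nonneg (P x)
      positivity
  -- integrability of E on Ioo 0 1
  have hEint : IntegrableOn E (Ioo (0:ℝ) 1) := by
    apply Integrable.mono' (g := fun _ => (2 * a) * (2 * a))
      (integrableOn_const measure_Ioo_lt_top.ne)
      (hEcont.aestronglyMeasurable measurableSet_Ioo)
    filter_upwards [ae_restrict_mem measurableSet_Ioo] with x hx
    obtain ⟨h0, h1⟩ := hEbound x hx
    rw [Real.norm_eq_abs, abs_of_nonneg h0]
    calc E x ≤ P x * Q x := h1
      _ ≤ (2 * a) * (2 * a) :=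
        mul_le_mul (hPle x hx.1.le) (hQle x hx.1.le) (hQnn x hx.1.le hx.2.le) (by positivity)
  -- integrability of the substituted integrand
  have hsubInt : IntegrableOn (fun x => |g x| • F (G x)) (Ioo (0:ℝ) 1) :=
    hEint.congr_fun (fun x hx => (hE x hx).symm) measurableSet_Ioo
  have hFIoo : IntegrableOn F (Ioo 0 (G 1)) := by
    rw [← himg]
    exact (integrableOn_image_iff_integrableOn_abs_deriv_smul measurableSet_Ioo hd hinj F).mpr
      hsubInt
  have hFIci : IntegrableOn F (Ici (G 1)) :=
    integrableOn_zero.congr_fun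
      (fun t ht => (hF2 t ht).symm) measurableSet_Ici
  have hsplit : Ioo (0:ℝ) (G 1) ∪ Ici (G 1) = Ioi 0 := Ioo_union_Ici_eq_Ioi hG1pos
  have hdisj : Disjoint (Ioo (0:ℝ) (G 1)) (Ici (G 1)) := by
    rw [Set.disjoint_left]
    intro x hx hx'
    exact absurd hx' (not_le.mpr hx.2)
  have hFint : IntegrableOn F (Ioi (0:ℝ)) := by
    rw [← hsplit]
    exact hFIoo.union hFIci
  refine ⟨hFint, ?_⟩
  -- compute/bound the integral
  have hIci0 : (∫ t in Ici (G 1), F t) = 0 := by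
    rw [setIntegral_congr_fun measurableSet_Ici hF2]
    simp
  have hIoiEq : (∫ t in Ioi (0:ℝ), F t) = ∫ t in Ioo 0 (G 1), F t := by
    rw [← hsplit, setIntegral_union hdisj measurableSet_Ici hFIoo hFIci, hIci0, add_zero]
  have hchg : (∫ t in Ioo (0:ℝ) (G 1), F t) = ∫ x in Ioo (0:ℝ) 1, E x := by
    rw [← himg, integral_image_eq_integral_abs_deriv_smul measurableSet_Ioo hd hinj F]
    exact setIntegral_congr_fun measurableSet_Ioo hE
  -- compare with ∫ P * Q
  have hPQint : IntegrableOn (fun x => P x * Q x) (Ioo (0:ℝ) 1) :=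
    ((hPcont.mul hQcont).integrableOn_Icc (a := 0) (b := 1)).mono_set Ioo_subset_Icc_self
  have hmono : (∫ x in Ioo (0:ℝ) 1, E x) ≤ ∫ x in Ioo (0:ℝ) 1, P x * Q x :=
    setIntegral_mono_on hEint hPQint measurableSet_Ioo (fun x hx => (hEbound x hx).2)
  -- compute ∫ P * Q over (0,1)
  have hAnti : ∀ x ∈ uIcc (0:ℝ) 1,
      HasDerivAt (fun x : ℝ => 2 * a ^ 2 * x ^ 2 / (1 + x ^ 2) ^ 2) (P x * Q x) x := by
    intro x _
    have hnum : HasDerivAt (fun x : ℝ => 2 * a ^ 2 * x ^ 2) (2 * a ^ 2 * (2 * x)) x := by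
      simpa using (hasDerivAt_pow 2 x).const_mul (2 * a ^ 2)
    have hdenx : HasDerivAt (fun x : ℝ => (1 + x ^ 2) ^ 2)
        (2 * (1 + x ^ 2) ^ 1 * (2 * x)) x := (hden x).pow 2
    have h : HasDerivAt (fun x : ℝ => 2 * a ^ 2 * x ^ 2 / (1 + x ^ 2) ^ 2) _ x :=
      hnum.div hdenx (by positivity)
    convert h using 1
    show 2 * a * x / (1 + x ^ 2) * (2 * a * (1 - x ^ 2) / (1 + x ^ 2) ^ 2) = _
    field_simp
    ring
  have hPQval : (∫ x in Ioo (0:ℝ) 1, P x * Q x) = a ^ 2 / 2 := by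
    rw [← MeasureTheory.integral_Ioc_eq_integral_Ioo,
      ← intervalIntegral.integral_of_le one_pos.le]
    rw [intervalIntegral.integral_eq_sub_of_hasDerivAt hAnti
      ((hPcont.mul hQcont).intervalIntegrable 0 1)]
    show 2 * a ^ 2 * (1:ℝ) ^ 2 / (1 + (1:ℝ) ^ 2) ^ 2 - 2 * a ^ 2 * (0:ℝ) ^ 2 / (1 + (0:ℝ) ^ 2) ^ 2
      = a ^ 2 / 2
    norm_num
    ring
  have hle : (∫ t in Ioi (0:ℝ), F t) ≤ a ^ 2 / 2 := by
    rw [hIoiEq, hchg, ← hPQval]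
    exact hmono
  have ha2 : a ^ 2 ≤ 1 / 2 := by
    have h2 : (0:ℝ) < Real.sqrt 2 := Real.sqrt_pos.mpr (by norm_num)
    have := pow_le_pow_left₀ ha.le ha' 2
    rw [div_pow, one_pow, Real.sq_sqrt (by norm_num : (2:ℝ) ≥ 0)] at this
    linarith
  refine ⟨le_trans hle (by nlinarith [sq_nonneg a]), le_trans hle (by nlinarith)⟩
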